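/- Let (W,S) be a Coxeter system with length-preserving automorphism σ, σ(S) = S. If w is σ-straight (i.e., ℓ of the n-th twisted power equals n·ℓ(w) for all n, where the twisted power is w·σ(w)·⋯·σ^{n−1}(w)), then w has minimal length in its σ-conjugacy class. -/
import Mathlib


/-- The σ-twisted power `w σ(w) σ²(w) ⋯ σ^{n−1}(w)`. -/
def twPow {W : Type*} [Group W] (σ : MulAut W) (w : W) : ℕ → W
  | 0 => 1
  | n + 1 => twPow σ w n * (σ ^ n) w

lemma twPow_conj {W : Type*} [Group W] (σ : MulAut W) (w g : W) (n : ℕ) :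
    twPow σ (g * w * (σ g)⁻¹) n = g * twPow σ w n * ((σ ^ n) g)⁻¹ := by
  induction n with
  | zero => simp [twPow]
  | succ n ih =>
      have hpow : ∀ x : W, (σ ^ (n + 1)) x = (σ ^ n) (σ x) := by
        intro x
        rw [pow_succ]
        rfl
      simp only [twPow, ih, map_mul, map_inv, hpow]
      group

/-- A σ-straight element (`ℓ(w σ(w) ⋯ σ^{n−1}(w)) = n ℓ(w)` for all `n`) has minimal
length in its σ-conjugacy class, for a length-preserving automorphism `σ` with
`σ(S) = S`. -/
theorem straight_is_minimal {B W : Type*} [Group W] {M : CoxeterMatrix B}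
    (cs : CoxeterSystem M W) (σ : MulAut W)
    (hσ : ∀ i : B, ∃ j : B, σ (cs.simple i) = cs.simple j)
    (hσℓ : ∀ w : W, cs.length (σ w) = cs.length w)
    (w : W)
    (hstraight : ∀ n : ℕ, cs.length (twPow σ w n) = n * cs.length w) :
    ∀ y : W, (∃ g : W, y = g * w * (σ g)⁻¹) → cs.length w ≤ cs.length y := by
  rintro y ⟨g, rfl⟩
  set y := g * w * (σ g)⁻¹ with hy
  -- σ^n preserves length
  have hσnℓ : ∀ (n : ℕ) (v : W), cs.length ((σ ^ n) v) = cs.length v := by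
    intro n
    induction n with
    | zero => intro v; rfl
    | succ n ih =>
        intro v
        have : (σ ^ (n + 1)) v = (σ ^ n) (σ v) := by rw [pow_succ]; rfl
        rw [this, ih, hσℓ]
  -- upper bound on twisted powers of y
  have hupper : ∀ n : ℕ, cs.length (twPow σ y n) ≤ n * cs.length y := by
    intro n
    induction n with
    | zero => simp [twPow]
    | succ n ih =>
        calc cs.length (twPow σ y n * (σ ^ n) y)
            ≤ cs.length (twPow σ y n) + cs.length ((σ ^ n) y) := cs.length_mul_le _ _
          _ ≤ n * cs.length y + cs.length y := by rw [hσnℓ]; omega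
          _ = (n + 1) * cs.length y := by ring
  -- key inequality: n ℓ(w) ≤ n ℓ(y) + 2 ℓ(g)
  have hkey : ∀ n : ℕ, n * cs.length w ≤ n * cs.length y + 2 * cs.length g := by
    intro n
    have hconj := twPow_conj σ w g n
    have : twPow σ w n = g⁻¹ * twPow σ y n * ((σ ^ n) g) := by
      rw [hconj]; group
    calc n * cs.length w = cs.length (twPow σ w n) := (hstraight n).symm
      _ = cs.length (g⁻¹ * twPow σ y n * ((σ ^ n) g)) := by rw [this]
      _ ≤ cs.length (g⁻¹ * twPow σ y n) + cs.length ((σ ^ n) g) := cs.length_mul_le _ _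
      _ ≤ cs.length g⁻¹ + cs.length (twPow σ y n) + cs.length ((σ ^ n) g) := by
            have := cs.length_mul_le g⁻¹ (twPow σ y n); omega
      _ ≤ cs.length g + n * cs.length y + cs.length g := by
            rw [cs.length_inv, hσnℓ]
            have := hupper n; omega
      _ = n * cs.length y + 2 * cs.length g := by ring
  by_contra h
  push_neg at h
  have h1 : cs.length y + 1 ≤ cs.length w := h
  have := hkey (2 * cs.length g + 1)
  nlinarith
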